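/- If x_1 < x_2 < ⋯ < x_9 are distinct positive integers of the form 2^a·3^b with 1/x_1 + ⋯ + 1/x_9 = 1, where 2 is among the x_i and max_i v_2(x_i) = 1, then {x_1,…,x_9} = {2, 3, 9, 27, 81, 243, 729, 2187, 4374}. -/

import Mathlib

def Sp (n : ℕ) : Prop := ∃ b : ℕ, n = 3 ^ b ∨ n = 2 * 3 ^ b

lemma pow3_le {b d : ℕ} (h : b ≤ d) : (3:ℕ) ^ b ≤ 3 ^ d :=
  Nat.pow_le_pow_right (by norm_num) h

lemma ratio {m n : ℕ} (hm : Sp m) (hn : Sp n) (h : m < n) : 3 * m ≤ 2 * n := by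
  obtain ⟨b, hb | hb⟩ := hm <;> obtain ⟨d, hd | hd⟩ := hn <;> subst hb <;> subst hd
  · have hbd : b < d := by
      by_contra hc
      have := pow3_le (not_lt.mp hc)
      omega
    have h1 : (3:ℕ) ^ (b+1) ≤ 3 ^ d := pow3_le hbd
    have h2 : (3:ℕ) ^ (b+1) = 3 * 3 ^ b := by ring
    omega
  · have hbd : b ≤ d := by
      by_contra hc
      have h1 : (3:ℕ) ^ (d+1) ≤ 3 ^ b := pow3_le (by omega)
      have h2 : (3:ℕ) ^ (d+1) = 3 * 3 ^ d := by ring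
      omega
    have := pow3_le hbd
    omega
  · have hbd : b < d := by
      by_contra hc
      have := pow3_le (not_lt.mp hc : d ≤ b)
      omega
    have h1 : (3:ℕ) ^ (b+1) ≤ 3 ^ d := pow3_le hbd
    have h2 : (3:ℕ) ^ (b+1) = 3 * 3 ^ b := by ring
    omega
  · have hbd : b < d := by
      by_contra hc
      have := pow3_le (not_lt.mp hc : d ≤ b)
      omega
    have h1 : (3:ℕ) ^ (b+1) ≤ 3 ^ d := pow3_le hbd
    have h2 : (3:ℕ) ^ (b+1) = 3 * 3 ^ b := by ring
    omega

lemma classify {n j : ℕ} (hn : Sp n) (h1 : 2 * 3 ^ j < n) (h2 : n < 2 * 3 ^ (j+1)) :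
    n = 3 ^ (j+1) := by
  obtain ⟨b, hb | hb⟩ := hn <;> subst hb
  · have hb1 : j < b := by
      by_contra hc
      have := pow3_le (not_lt.mp hc : b ≤ j)
      omega
    have hb2 : b < j + 2 := by
      by_contra hc
      have h3 : (3:ℕ) ^ (j+2) ≤ 3 ^ b := pow3_le (by omega)
      have h4 : (3:ℕ) ^ (j+2) = 3 * 3 ^ (j+1) := by ring
      omega
    have : b = j + 1 := by omega
    rw [this]
  · exfalso
    have hb1 : j < b := by
      by_contra hc
      have := pow3_le (not_lt.mp hc : b ≤ j)
      omega
    have := pow3_le (hb1 : j + 1 ≤ b)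
    omega

lemma tailbound (y : ℕ → ℕ) (hpos : ∀ j, 0 < y j) (hchain : ∀ j, 3 * y j ≤ 2 * y (j+1)) :
    ∀ m k, ∑ j ∈ Finset.range m, (2:ℚ) / y (k+j) < 6 / y k := by
  intro m
  induction m with
  | zero =>
    intro k
    simp only [Finset.range_zero, Finset.sum_empty]
    exact div_pos (by norm_num) (by exact_mod_cast hpos k)
  | succ m ih =>
    intro k
    rw [Finset.sum_range_succ']
    have hre : ∑ j ∈ Finset.range m, (2:ℚ) / y (k+(j+1))
        = ∑ j ∈ Finset.range m, (2:ℚ) / y ((k+1)+j) := by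
      apply Finset.sum_congr rfl
      intro j _
      have he : k + (j+1) = (k+1)+j := by omega
      rw [he]
    rw [hre]
    have h1 := ih (k+1)
    have hk : (0:ℚ) < y k := by exact_mod_cast hpos k
    have hk1 : (0:ℚ) < y (k+1) := by exact_mod_cast hpos (k+1)
    have h2 : (6:ℚ) / y (k+1) ≤ 4 / y k := by
      rw [div_le_div_iff₀ hk1 hk]
      have := hchain k
      have : (3:ℚ) * y k ≤ 2 * y (k+1) := by exact_mod_cast this
      linarith
    have h3 : (2:ℚ) / y (k+0) = 2 / y k := by norm_num
    rw [h3]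
    have h4 : (4:ℚ) / y k + 2 / y k = 6 / y k := by ring
    linarith

lemma step (y : ℕ → ℕ) (hpos : ∀ j, 0 < y j) (hchain : ∀ j, 3 * y j ≤ 2 * y (j+1))
    (k m : ℕ) (hm : 2 ≤ m) (hSp : Sp (y k))
    (E : ∑ j ∈ Finset.range m, (2:ℚ) / y (k+j) = 3 / 3 ^ k) :
    y k = 3 ^ k ∧ ∑ j ∈ Finset.range (m-1), (2:ℚ) / y ((k+1)+j) = 3 / 3 ^ (k+1) := by
  have hyq : (0:ℚ) < y k := by exact_mod_cast hpos k
  have pk : (0:ℚ) < 3 ^ k := by positivity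
  -- upper bound
  have hub := tailbound y hpos hchain m k
  rw [E, div_lt_div_iff₀ pk hyq] at hub
  have hub' : 3 * y k < 6 * 3 ^ k := by exact_mod_cast hub
  -- split off first term
  have hm' : m - 1 + 1 = m := by omega
  rw [← hm', Finset.sum_range_succ'] at E
  have hre : ∑ j ∈ Finset.range (m-1), (2:ℚ) / y (k+(j+1))
      = ∑ j ∈ Finset.range (m-1), (2:ℚ) / y ((k+1)+j) := by
    apply Finset.sum_congr rfl
    intro j _
    have he : k + (j+1) = (k+1)+j := by omega
    rw [he]
  rw [hre] at E
  have hk0 : (2:ℚ) / y (k+0) = 2 / y k := by norm_num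
  rw [hk0] at E
  have hrest : 0 < ∑ j ∈ Finset.range (m-1), (2:ℚ) / y ((k+1)+j) := by
    apply Finset.sum_pos
    · intro j _
      exact div_pos (by norm_num) (by exact_mod_cast hpos ((k+1)+j))
    · exact Finset.nonempty_range_iff.mpr (by omega)
  have hlow : 2 / (y k : ℚ) < 3 / 3 ^ k := by linarith
  rw [div_lt_div_iff₀ hyq pk] at hlow
  have hlow' : 2 * 3 ^ k < 3 * y k := by exact_mod_cast hlow
  -- classification
  have hval : y k = 3 ^ k := by
    rcases Nat.eq_zero_or_pos k with hk | hk
    · subst hk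
      simp only [pow_zero] at hlow' hub' ⊢
      omega
    · obtain ⟨j, rfl⟩ : ∃ j, k = j + 1 := ⟨k - 1, by omega⟩
      have h3 : (3:ℕ) ^ (j+1) = 3 * 3 ^ j := by ring
      apply classify hSp
      · omega
      · omega
  refine ⟨hval, ?_⟩
  have hcast : ((y k : ℕ) : ℚ) = 3 ^ k := by rw [hval]; push_cast; ring
  rw [hcast] at E
  have h31 : (3:ℚ) / 3 ^ (k+1) = 3 / 3 ^ k - 2 / 3 ^ k := by
    rw [pow_succ]
    field_simp
    ring
  rw [h31]
  linarith

theorem stmt_8 (x : Fin 9 → ℕ) (hmono : StrictMono x) (hx : ∀ i, 0 < x i)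
    (hform : ∀ i, ∃ a b : ℕ, x i = 2 ^ a * 3 ^ b)
    (hsum : ∑ i, (1 : ℚ) / x i = 1)
    (h2 : ∃ i, x i = 2)
    (hval : Finset.univ.sup (fun i => padicValNat 2 (x i)) = 1) :
    Finset.univ.image x = ({2, 3, 9, 27, 81, 243, 729, 2187, 4374} : Finset ℕ) := by
  -- every x i is 3^b or 2*3^b
  have hsp : ∀ i, Sp (x i) := by
    intro i
    obtain ⟨a, b, hab⟩ := hform i
    have h3b : padicValNat 2 (3 ^ b) = 0 := by
      apply padicValNat.eq_zero_of_not_dvd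
      intro hdvd
      have := Nat.Prime.dvd_of_dvd_pow Nat.prime_two hdvd
      omega
    have h2a : padicValNat 2 (2 ^ a) = a := by
      simpa using padicValNat.prime_pow_self 2 a
    have hv : padicValNat 2 (x i) = a := by
      rw [hab, padicValNat.mul (by positivity) (by positivity), h2a, h3b]
      omega
    have hle : padicValNat 2 (x i) ≤ 1 := by
      rw [← hval]
      exact Finset.le_sup (f := fun i => padicValNat 2 (x i)) (Finset.mem_univ i)
    rw [hv] at hle
    interval_cases a
    · exact ⟨b, Or.inl (by simpa using hab)⟩
    · exact ⟨b, Or.inr (by simpa using hab)⟩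
  -- x 0 = 2
  obtain ⟨j, hj⟩ := h2
  have hx0le : x 0 ≤ 2 := hj ▸ hmono.monotone (Fin.zero_le j)
  have hx0 : x 0 = 2 := by
    rcases Nat.lt_or_ge (x 0) 2 with h | h
    · exfalso
      have hx01 : x 0 = 1 := by have := hx 0; omega
      have hj0 : j ≠ 0 := by intro h; rw [h] at hj; omega
      have hpair : ({0, j} : Finset (Fin 9)) ⊆ Finset.univ := Finset.subset_univ _
      have hle : ∑ i ∈ ({0, j} : Finset (Fin 9)), (1:ℚ) / x i ≤ ∑ i, (1:ℚ) / x i := by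
        apply Finset.sum_le_sum_of_subset_of_nonneg hpair
        intro i _ _
        positivity
      rw [Finset.sum_pair (Ne.symm hj0), hsum, hx01, hj] at hle
      norm_num at hle
    · omega
  -- extended sequence
  set y : ℕ → ℕ := fun n => if h : n < 9 then x ⟨n, h⟩ else 3 ^ (n - 8) * x 8 with hy
  have hyx : ∀ (n : ℕ) (h : n < 9), y n = x ⟨n, h⟩ := by
    intro n h
    simp only [hy, dif_pos h]
  have ypos : ∀ n, 0 < y n := by
    intro n
    by_cases h : n < 9
    · rw [hyx n h]; exact hx _
    · simp only [hy, dif_neg h]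
      exact Nat.mul_pos (Nat.pow_pos (by norm_num)) (hx 8)
  have ysp : ∀ (n : ℕ) (h : n < 9), Sp (y n) := by
    intro n h
    rw [hyx n h]
    exact hsp _
  have ychain : ∀ n, 3 * y n ≤ 2 * y (n+1) := by
    intro n
    by_cases h : n + 1 < 9
    · rw [hyx n (by omega), hyx (n+1) h]
      exact ratio (hsp _) (hsp _) (hmono (by exact Fin.mk_lt_mk.mpr (by omega)))
    · by_cases h8 : n < 9
      · have hn8 : n = 8 := by omega
        subst hn8
        have e1 : y 8 = x 8 := by
          rw [hyx 8 (by norm_num)]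
          congr
        have e2 : y 9 = 3 * x 8 := by
          simp only [hy, dif_neg (by norm_num : ¬ (9:ℕ) < 9)]
          norm_num
        rw [e1, e2]
        omega
      · have e1 : y n = 3 ^ (n-8) * x 8 := by simp only [hy, dif_neg h8]
        have e2 : y (n+1) = 3 * (3 ^ (n-8) * x 8) := by
          simp only [hy, dif_neg (by omega : ¬ n + 1 < 9)]
          have : n + 1 - 8 = (n - 8) + 1 := by omega
          rw [this, pow_succ]
          ring
        rw [e1, e2]
        have := Nat.zero_le (3 ^ (n-8) * x 8)
        omega
  -- the sum in terms of y
  have hsum9 : ∑ j ∈ Finset.range 9, (2:ℚ) / y j = 2 := by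
    rw [← Fin.sum_univ_eq_sum_range (fun j => (2:ℚ) / y j) 9]
    have hc : ∀ i : Fin 9, (2:ℚ) / y ↑i = 2 * ((1:ℚ) / x i) := by
      intro i
      rw [hyx ↑i i.isLt, Fin.eta]
      ring
    rw [Finset.sum_congr rfl (fun i _ => hc i), ← Finset.mul_sum, hsum]
    norm_num
  -- peel off x 0 = 2
  have hy0 : y 0 = 2 := by rw [hyx 0 (by norm_num)]; exact hx0
  have E1 : ∑ j ∈ Finset.range 8, (2:ℚ) / y (1+j) = 3 / 3 ^ 1 := by
    rw [Finset.sum_range_succ'] at hsum9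
    have hre : ∑ j ∈ Finset.range 8, (2:ℚ) / y (j+1)
        = ∑ j ∈ Finset.range 8, (2:ℚ) / y (1+j) := by
      apply Finset.sum_congr rfl
      intro j _
      have he : j + 1 = 1 + j := by omega
      rw [he]
    rw [hre] at hsum9
    have : (2:ℚ) / y (0) = 1 := by rw [hy0]; norm_num
    rw [this] at hsum9
    norm_num
    linarith
  have S1 := step y ypos ychain 1 8 (by norm_num) (ysp 1 (by norm_num)) E1
  have S2 := step y ypos ychain 2 7 (by norm_num) (ysp 2 (by norm_num)) S1.2
  have S3 := step y ypos ychain 3 6 (by norm_num) (ysp 3 (by norm_num)) S2.2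
  have S4 := step y ypos ychain 4 5 (by norm_num) (ysp 4 (by norm_num)) S3.2
  have S5 := step y ypos ychain 5 4 (by norm_num) (ysp 5 (by norm_num)) S4.2
  have S6 := step y ypos ychain 6 3 (by norm_num) (ysp 6 (by norm_num)) S5.2
  have S7 := step y ypos ychain 7 2 (by norm_num) (ysp 7 (by norm_num)) S6.2
  have E8 := S7.2
  rw [Finset.sum_range_one] at E8
  have hy8 : y 8 = 4374 := by
    have h8 : (2:ℚ) / y (8) = 3 / 3 ^ 8 := by
      have : 7 + 1 + 0 = 8 := by norm_num
      rw [this] at E8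
      exact E8
    have hp : (0:ℚ) < y 8 := by exact_mod_cast ypos 8
    rw [div_eq_div_iff hp.ne' (by positivity : (0:ℚ) < (3:ℚ)^8).ne'] at h8
    have : 2 * (3:ℕ) ^ 8 = 3 * y 8 := by exact_mod_cast h8
    have h38 : (3:ℕ) ^ 8 = 6561 := by norm_num
    omega
  -- collect values
  have hv0 : x 0 = 2 := hx0
  have hfx : ∀ (n : ℕ) (h : n < 9) (i : Fin 9), i.val = n → x i = y n := by
    intro n h i hi
    rw [hyx n h]
    congr 1
    exact Fin.ext hi
  have hv1 : x 1 = 3 := by rw [hfx 1 (by norm_num) 1 (by decide), S1.1]; norm_num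
  have hv2 : x 2 = 9 := by rw [hfx 2 (by norm_num) 2 (by decide), S2.1]; norm_num
  have hv3 : x 3 = 27 := by rw [hfx 3 (by norm_num) 3 (by decide), S3.1]; norm_num
  have hv4 : x 4 = 81 := by rw [hfx 4 (by norm_num) 4 (by decide), S4.1]; norm_num
  have hv5 : x 5 = 243 := by rw [hfx 5 (by norm_num) 5 (by decide), S5.1]; norm_num
  have hv6 : x 6 = 729 := by rw [hfx 6 (by norm_num) 6 (by decide), S6.1]; norm_num
  have hv7 : x 7 = 2187 := by rw [hfx 7 (by norm_num) 7 (by decide), S7.1]; norm_num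
  have hv8 : x 8 = 4374 := by rw [hfx 8 (by norm_num) 8 (by decide)]; exact hy8
  have hxv : x = ![2, 3, 9, 27, 81, 243, 729, 2187, 4374] := by
    funext i
    fin_cases i
    · exact hv0
    · exact hv1
    · exact hv2
    · exact hv3
    · exact hv4
    · exact hv5
    · exact hv6
    · exact hv7
    · exact hv8
  rw [hxv]
  decide
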